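/- Let α > 0 and let a, b, c be real numbers with 1 + a > 0, c ≥ 0, and a + b/α² + c/α⁴ ≥ 0. Set ν = √(1+a), β = √(a + b/α² + c/α⁴), σ = √c/α², ã = (1 − ν + β + σ)/2, b̃ = (1 + ν + β + σ)/2, c̃ = 1 + σ. Define Φ : (0, α) → ℝ by Φ(y) = y^σ · (y² + α²)^{β/2} · ₂F₁(ã, b̃; c̃; −y²/α²). Then Φ is twice differentiable on (0, α) and satisfies y(y² + α²)·d/dy[ y(y² + α²)·Φ′(y) ] − (a·y⁴ − b·y² + c)·Φ(y) = 0 for every y ∈ (0, α). -/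

import Mathlib

set_option maxHeartbeats 1000000

open Real Filter

/-- The Gaussian hypergeometric function `₂F₁(a, b; c; x)`, defined by its power
series `Σ_k (a)_k (b)_k / ((c)_k k!) · x^k` with Pochhammer symbols. -/
noncomputable def hyp2F1 (a b c x : ℝ) : ℝ :=
  ∑' k : ℕ, ((ascPochhammer ℝ k).eval a * (ascPochhammer ℝ k).eval b /
    ((ascPochhammer ℝ k).eval c * (k.factorial : ℝ))) * x ^ k

namespace Stmt9Aux

noncomputable def pk (z : ℝ) (n : ℕ) : ℝ := (ascPochhammer ℝ n).eval z

@[simp] lemma pk_zero (z : ℝ) : pk z 0 = 1 := by simp [pk]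

lemma pk_succ (z : ℝ) (n : ℕ) : pk z (n+1) = pk z n * (z + n) := by
  simp [pk, ascPochhammer_succ_right, Polynomial.eval_mul]

lemma pk_pos {z : ℝ} (hz : 0 < z) (n : ℕ) : 0 < pk z n := by
  induction n with
  | zero => simp
  | succ n ih => rw [pk_succ]; positivity

lemma pk_nonneg {A : ℝ} (hA : 0 ≤ A) (n : ℕ) : 0 ≤ pk A n := by
  induction n with
  | zero => simp
  | succ n ih =>
    rw [pk_succ]
    have : (0:ℝ) ≤ A + n := by positivity
    positivity

lemma pk_abs_le {z A : ℝ} (h : |z| ≤ A) (n : ℕ) : |pk z n| ≤ pk A n := by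
  have hA : 0 ≤ A := le_trans (abs_nonneg z) h
  induction n with
  | zero => simp
  | succ n ih =>
    rw [pk_succ, pk_succ, abs_mul]
    have h1 : |z + n| ≤ A + n := by
      calc |z + n| ≤ |z| + |(n:ℝ)| := abs_add_le _ _
      _ ≤ A + n := by rw [Nat.abs_cast]; linarith
    exact mul_le_mul ih h1 (abs_nonneg _) (pk_nonneg hA n)

lemma pk_ge_factorial {z : ℝ} (h : 1 ≤ z) (n : ℕ) : (n.factorial : ℝ) ≤ pk z n := by
  induction n with
  | zero => simp
  | succ n ih =>
    rw [pk_succ]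
    have h1 : ((n+1 : ℕ) : ℝ) ≤ z + n := by push_cast; linarith
    calc ((n+1).factorial : ℝ) = (n.factorial : ℝ) * ((n+1:ℕ):ℝ) := by
          push_cast [Nat.factorial_succ]; ring
    _ ≤ pk z n * (z + n) := by
        apply mul_le_mul ih h1 (by positivity)
        exact le_trans (by positivity) ih

noncomputable def uu (ta tb tc : ℝ) (n : ℕ) : ℝ :=
  pk ta n * pk tb n / (pk tc n * n.factorial)

lemma uu_rec {ta tb tc : ℝ} (htc : 0 < tc) (n : ℕ) :
    uu ta tb tc (n+1) * (((n:ℝ)+1) * (tc + n)) = uu ta tb tc n * ((ta+n)*(tb+n)) := by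
  have h1 : (0:ℝ) < pk tc n := pk_pos htc n
  have h2 : (0:ℝ) < (n.factorial : ℝ) := by positivity
  have h3 : (0:ℝ) < tc + n := by positivity
  have h4 : ((n+1).factorial : ℝ) = (n.factorial : ℝ) * ((n:ℝ)+1) := by
    push_cast [Nat.factorial_succ]; ring
  rw [uu, uu, pk_succ, pk_succ, pk_succ, h4]
  field_simp

noncomputable def ww (A : ℝ) (n : ℕ) : ℝ := (pk A n / n.factorial)^2

lemma ww_pos {A : ℝ} (hA : 0 < A) (n : ℕ) : 0 < ww A n := by
  have := pk_pos hA n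
  have h2 : (0:ℝ) < (n.factorial : ℝ) := by positivity
  rw [ww]; positivity

lemma uu_abs_le {ta tb tc A : ℝ} (htc : 1 ≤ tc) (hta : |ta| ≤ A) (htb : |tb| ≤ A) (n : ℕ) :
    |uu ta tb tc n| ≤ ww A n := by
  have h1 : (0:ℝ) < pk tc n := pk_pos (by linarith) n
  have h2 : (0:ℝ) < (n.factorial : ℝ) := by positivity
  have h5 := pk_ge_factorial htc n
  rw [uu, ww, abs_div, abs_mul, div_pow]
  apply div_le_div₀ (by positivity)
  · calc |pk ta n| * |pk tb n| ≤ pk A n * pk A n :=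
        mul_le_mul (pk_abs_le hta n) (pk_abs_le htb n) (abs_nonneg _)
          (pk_nonneg (le_trans (abs_nonneg ta) hta) n)
    _ = (pk A n)^2 := (sq _).symm
  · positivity
  · rw [abs_of_pos (by positivity)]
    calc (n.factorial:ℝ)^2 = (n.factorial:ℝ) * (n.factorial:ℝ) := sq _
    _ ≤ pk tc n * (n.factorial:ℝ) := by nlinarith

lemma ww_succ_le {A : ℝ} (hA : 1 ≤ A) (n : ℕ) : ww A (n+1) ≤ A^2 * ww A n := by
  have h2 : (0:ℝ) < (n.factorial : ℝ) := by positivity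
  have h4 : ((n+1).factorial : ℝ) = (n.factorial : ℝ) * ((n:ℝ)+1) := by
    push_cast [Nat.factorial_succ]; ring
  have hpk := pk_nonneg (by linarith : (0:ℝ) ≤ A) n
  have key : (A + n) ≤ A * ((n:ℝ)+1) := by nlinarith
  have base : pk A n * (A+n) / ((n.factorial:ℝ)*((n:ℝ)+1)) ≤ A * pk A n / (n.factorial:ℝ) := by
    rw [div_le_div_iff₀ (by positivity) (by positivity)]
    nlinarith [mul_le_mul_of_nonneg_left key (mul_nonneg hpk h2.le)]
  calc ww A (n+1) = (pk A n * (A+n) / ((n.factorial:ℝ)*((n:ℝ)+1)))^2 := by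
        rw [ww, pk_succ, h4]
  _ ≤ (A * pk A n / (n.factorial:ℝ))^2 := pow_le_pow_left₀ (by positivity) base 2
  _ = A^2 * ww A n := by rw [ww]; field_simp

lemma ww_summable {A r : ℝ} (hA : 1 ≤ A) (hr0 : 0 < r) (hr1 : r < 1) :
    Summable (fun n : ℕ => ww A n * ((n:ℝ)+2)^4 * r^n) := by
  have hApos : (0:ℝ) < A := by linarith
  apply summable_of_ratio_test_tendsto_lt_one hr1
  · filter_upwards with n
    have := ww_pos hApos n
    positivity
  · have hterm : ∀ n : ℕ, ‖ww A (n+1) * ((↑(n+1):ℝ)+2)^4 * r^(n+1)‖ / ‖ww A n * ((n:ℝ)+2)^4 * r^n‖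
        = ((A+n)/((n:ℝ)+1))^2 * (((n:ℝ)+3)/((n:ℝ)+2))^4 * r := by
      intro n
      have h2 : (0:ℝ) < (n.factorial : ℝ) := by positivity
      have h4 : ((n+1).factorial : ℝ) = (n.factorial : ℝ) * ((n:ℝ)+1) := by
        push_cast [Nat.factorial_succ]; ring
      have hw := ww_pos hApos n
      have hApk := pk_pos hApos n
      have hAn : (0:ℝ) < A + n := by positivity
      have hcast : ((↑(n+1):ℝ)+2) = (n:ℝ)+3 := by push_cast; ring
      rw [hcast]
      rw [Real.norm_eq_abs, Real.norm_eq_abs,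
        abs_of_pos (by have := ww_pos hApos (n+1); positivity),
        abs_of_pos (by positivity)]
      rw [ww, ww, pk_succ, h4]
      field_simp
      ring
    rw [show (fun n : ℕ => ‖ww A (n+1) * ((↑(n+1):ℝ)+2)^4 * r^(n+1)‖ / ‖ww A n * ((n:ℝ)+2)^4 * r^n‖)
        = fun n : ℕ => ((A+n)/((n:ℝ)+1))^2 * (((n:ℝ)+3)/((n:ℝ)+2))^4 * r from funext hterm]
    have hshift : Tendsto (fun n : ℕ => ((n:ℝ)+1)) atTop atTop :=
      tendsto_atTop_add_const_right atTop 1 tendsto_natCast_atTop_atTop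
    have hshift2 : Tendsto (fun n : ℕ => ((n:ℝ)+2)) atTop atTop :=
      tendsto_atTop_add_const_right atTop 2 tendsto_natCast_atTop_atTop
    have t1 : Tendsto (fun n : ℕ => (A+n)/((n:ℝ)+1)) atTop (nhds 1) := by
      have h0 : Tendsto (fun n : ℕ => (A-1)/((n:ℝ)+1)) atTop (nhds 0) :=
        tendsto_const_nhds.div_atTop hshift
      have heq : (fun n : ℕ => (A+n)/((n:ℝ)+1)) = fun n : ℕ => 1 + (A-1)/((n:ℝ)+1) := by
        funext n
        have hne : ((n:ℝ)+1) ≠ 0 := by positivity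
        field_simp
        ring
      rw [heq]
      simpa using tendsto_const_nhds.add h0
    have t2 : Tendsto (fun n : ℕ => ((n:ℝ)+3)/((n:ℝ)+2)) atTop (nhds 1) := by
      have h0 : Tendsto (fun n : ℕ => (1:ℝ)/((n:ℝ)+2)) atTop (nhds 0) :=
        tendsto_const_nhds.div_atTop hshift2
      have heq : (fun n : ℕ => ((n:ℝ)+3)/((n:ℝ)+2)) = fun n : ℕ => 1 + 1/((n:ℝ)+2) := by
        funext n
        have hne : ((n:ℝ)+2) ≠ 0 := by positivity
        field_simp
        ring
      rw [heq]
      simpa using tendsto_const_nhds.add h0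
    have := ((t1.pow 2).mul (t2.pow 4)).mul_const r
    simpa using this

section master
variable {e f : ℕ → ℝ} {A C D : ℝ}

lemma summable_of_le_ww (hA : 1 ≤ A)
    (hb : ∀ n, |f n| ≤ D * (ww A n * ((n:ℝ)+2)^4)) {x : ℝ} (hx : |x| < 1) :
    Summable (fun n => f n * x^n) := by
  have hApos : (0:ℝ) < A := by linarith
  set r : ℝ := (1 + |x|)/2 with hr
  have hr0 : 0 < r := by have := abs_nonneg x; rw [hr]; linarith
  have hxr : |x| ≤ r := by rw [hr]; linarith
  have hr1 : r < 1 := by rw [hr]; linarith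
  apply Summable.of_norm
  refine Summable.of_nonneg_of_le (fun n => norm_nonneg _) ?_
    ((ww_summable hA hr0 hr1).mul_left D)
  intro n
  have hw := (ww_pos hApos n).le
  have h1 : ‖f n * x^n‖ = |f n| * |x|^n := by
    rw [norm_mul, Real.norm_eq_abs, Real.norm_eq_abs, abs_pow]
  rw [h1]
  calc |f n| * |x|^n ≤ (D * (ww A n * ((n:ℝ)+2)^4)) * r^n :=
        mul_le_mul (hb n) (pow_le_pow_left₀ (abs_nonneg x) hxr n)
          (by positivity) (le_trans (abs_nonneg _) (hb n))
  _ = D * (ww A n * ((n:ℝ)+2)^4 * r^n) := by ring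

variable (hA : 1 ≤ A) (hC : 0 ≤ C)
  (he : ∀ n, |e n| ≤ C * (ww A n * ((n:ℝ)+2)^2))

include hA hC he

lemma summable_e {x : ℝ} (hx : |x| < 1) : Summable (fun n => e n * x^n) := by
  have hApos : (0:ℝ) < A := by linarith
  apply summable_of_le_ww hA (D := C) _ hx
  intro n
  have hw := (ww_pos hApos n).le
  calc |e n| ≤ C * (ww A n * ((n:ℝ)+2)^2) := he n
  _ ≤ C * (ww A n * ((n:ℝ)+2)^4) := by
      have hP1 : (1:ℝ) ≤ (n:ℝ)+2 := by
        have := Nat.cast_nonneg (α := ℝ) n; linarith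
      exact mul_le_mul_of_nonneg_left (mul_le_mul_of_nonneg_left
        (pow_le_pow_right₀ hP1 (by norm_num)) hw) hC

lemma summable_e_shift {x : ℝ} (hx : |x| < 1) :
    Summable (fun n => e (n+1) * ((n:ℝ)+1) * x^n) := by
  have hApos : (0:ℝ) < A := by linarith
  apply summable_of_le_ww hA (D := C * A^2) _ hx
  intro n
  have hw := (ww_pos hApos n).le
  have hw1 := (ww_pos hApos (n+1)).le
  have hws := ww_succ_le hA n
  have h1 : |e (n+1) * ((n:ℝ)+1)| = |e (n+1)| * ((n:ℝ)+1) := by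
    rw [abs_mul, abs_of_pos (by positivity : (0:ℝ) < (n:ℝ)+1)]
  have hcast : ((↑(n+1):ℝ)+2) = (n:ℝ)+3 := by push_cast; ring
  rw [h1]
  calc |e (n+1)| * ((n:ℝ)+1)
      ≤ (C * (ww A (n+1) * ((n:ℝ)+3)^2)) * ((n:ℝ)+1) := by
        have := he (n+1); rw [hcast] at this
        exact mul_le_mul_of_nonneg_right this (by positivity)
  _ ≤ (C * ((A^2 * ww A n) * ((n:ℝ)+3)^2)) * ((n:ℝ)+1) := by
      gcongr
  _ ≤ C * A^2 * (ww A n * ((n:ℝ)+2)^4) := by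
      have key : ((n:ℝ)+3)^2 * ((n:ℝ)+1) ≤ ((n:ℝ)+2)^4 := by nlinarith [sq_nonneg ((n:ℝ))]
      calc (C * ((A^2 * ww A n) * ((n:ℝ)+3)^2)) * ((n:ℝ)+1)
          = (C * A^2 * ww A n) * (((n:ℝ)+3)^2 * ((n:ℝ)+1)) := by ring
      _ ≤ (C * A^2 * ww A n) * ((n:ℝ)+2)^4 := by
          apply mul_le_mul_of_nonneg_left key (by positivity)
      _ = C * A^2 * (ww A n * ((n:ℝ)+2)^4) := by ring

lemma hasDerivAt_e {x : ℝ} (hx : |x| < 1) :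
    HasDerivAt (fun z => ∑' n, e n * z^n) (∑' n, e (n+1) * ((n:ℝ)+1) * x^n) x := by
  have hApos : (0:ℝ) < A := by linarith
  set r : ℝ := (1 + |x|)/2 with hr
  have hr0 : 0 < r := by have := abs_nonneg x; rw [hr]; linarith
  have hxr : |x| < r := by rw [hr]; linarith
  have hr1 : r < 1 := by rw [hr]; linarith
  have hball : x ∈ Metric.ball (0:ℝ) r := by
    simpa [Real.norm_eq_abs] using hxr
  have hmain : HasDerivAt (fun z => ∑' n, e n * z^n)
      (∑' n, e n * ((n:ℝ) * x^(n-1))) x := by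
    apply hasDerivAt_tsum_of_isPreconnected
      (u := fun n => (C/r) * (ww A n * ((n:ℝ)+2)^4 * r^n))
      (((ww_summable hA hr0 hr1).mul_left (C/r)))
      Metric.isOpen_ball (convex_ball (0:ℝ) r).isPreconnected
      (fun n z _ => (hasDerivAt_pow n z).const_mul (e n))
      ?_ (Metric.mem_ball_self hr0) ?_ hball
    · intro n z hz
      have hzr : |z| ≤ r := by
        have : dist z 0 < r := hz
        rw [Real.dist_eq, sub_zero] at this
        exact this.le
      have hw := (ww_pos hApos n).le
      rw [Real.norm_eq_abs, abs_mul, abs_mul, Nat.abs_cast, abs_pow]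
      match n with
      | 0 =>
        have hw0 := (ww_pos hApos 0).le
        simp only [Nat.cast_zero, zero_mul, mul_zero]
        positivity
      | (m+1) =>
        have hwm := (ww_pos hApos (m+1)).le
        have h1 : |z|^(m+1-1) ≤ r^m := pow_le_pow_left₀ (abs_nonneg z) hzr m
        have hcast : ((↑(m+1):ℝ)) = (m:ℝ)+1 := by push_cast; ring
        have hP : (1:ℝ) ≤ (m:ℝ)+3 := by
          have := Nat.cast_nonneg (α := ℝ) m; linarith
        calc |e (m+1)| * (((m+1:ℕ):ℝ) * |z|^(m+1-1))
            ≤ (C * (ww A (m+1) * ((↑(m+1):ℝ)+2)^2)) * (((m+1:ℕ):ℝ) * r^m) := by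
              exact mul_le_mul (he (m+1)) (mul_le_mul_of_nonneg_left h1 (by positivity))
                (by positivity) (mul_nonneg hC (mul_nonneg hwm (by positivity)))
        _ ≤ C/r * (ww A (m+1) * ((↑(m+1):ℝ)+2)^4 * r^(m+1)) := by
              rw [hcast]
              have hr' : C/r * (ww A (m+1) * ((m:ℝ)+1+2)^4 * r^(m+1))
                  = C * (ww A (m+1) * (((m:ℝ)+3)^4 * r^m)) := by
                field_simp [pow_succ]
                ring
              rw [hr']
              have key : ((m:ℝ)+1+2)^2 * (((m:ℝ)+1)) ≤ ((m:ℝ)+3)^4 := by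
                nlinarith [sq_nonneg ((m:ℝ)), sq_nonneg ((m:ℝ)+3)]
              calc (C * (ww A (m+1) * ((m:ℝ)+1+2)^2)) * (((m:ℝ)+1) * r^m)
                  = (C * ww A (m+1)) * ((((m:ℝ)+1+2)^2 * ((m:ℝ)+1)) * r^m) := by ring
              _ ≤ (C * ww A (m+1)) * (((m:ℝ)+3)^4 * r^m) := by
                  apply mul_le_mul_of_nonneg_left _ (by positivity)
                  exact mul_le_mul_of_nonneg_right key (by positivity)
              _ = C * (ww A (m+1) * (((m:ℝ)+3)^4 * r^m)) := by ring
    · apply summable_of_ne_finset_zero (s := {0})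
      intro n hn
      have : n ≠ 0 := by simpa using hn
      simp [zero_pow this]
  have hs : HasSum (fun n => e (n+1) * ((n:ℝ)+1) * x^n)
      (∑' n, e (n+1) * ((n:ℝ)+1) * x^n) :=
    (summable_e_shift hA hC he hx).hasSum
  have hs2 : HasSum (fun n => e n * ((n:ℝ) * x^(n-1)))
      (∑' n, e (n+1) * ((n:ℝ)+1) * x^n) := by
    have he0 : (fun n : ℕ => e ((n+1)) * (((n+1:ℕ):ℝ) * x^(n+1-1)))
        = fun n => e (n+1) * ((n:ℝ)+1) * x^n := by
      funext n; push_cast; ring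
    have := (hasSum_nat_add_iff (f := fun n => e n * ((n:ℝ) * x^(n-1))) 1).mp (by rw [he0]; exact hs)
    simpa using this
  rwa [hs2.tsum_eq] at hmain
end master

noncomputable def vv (ta tb tc : ℝ) (n : ℕ) : ℝ := uu ta tb tc (n+1) * ((n:ℝ)+1)
noncomputable def vv2 (ta tb tc : ℝ) (n : ℕ) : ℝ :=
  uu ta tb tc (n+2) * (((n:ℝ)+2) * ((n:ℝ)+1))
noncomputable def F0 (ta tb tc x : ℝ) : ℝ := ∑' n, uu ta tb tc n * x^n
noncomputable def FF1 (ta tb tc x : ℝ) : ℝ := ∑' n, vv ta tb tc n * x^n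
noncomputable def FF2 (ta tb tc x : ℝ) : ℝ := ∑' n, vv2 ta tb tc n * x^n

section inst
variable {ta tb tc : ℝ}

lemma exists_bounds (htc : 1 ≤ tc) : ∃ A : ℝ, 1 ≤ A ∧
    (∀ n, |uu ta tb tc n| ≤ 1 * (ww A n * ((n:ℝ)+2)^2)) ∧
    (∀ n, |vv ta tb tc n| ≤ A^2 * (ww A n * ((n:ℝ)+2)^2)) ∧
    (∀ n, |vv2 ta tb tc n| ≤ (A^2*A^2) * (ww A n * ((n:ℝ)+2)^2)) := by
  have hta : |ta| ≤ max |ta| |tb| + 1 := by have := le_max_left |ta| |tb|; linarith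
  have htb : |tb| ≤ max |ta| |tb| + 1 := by have := le_max_right |ta| |tb|; linarith
  have hA : 1 ≤ max |ta| |tb| + 1 := by have := abs_nonneg ta; have := le_max_left |ta| |tb|; linarith
  set A := max |ta| |tb| + 1 with hAdef
  have hApos : (0:ℝ) < A := by linarith
  refine ⟨A, hA, ?_, ?_, ?_⟩
  · intro n
    have hw := (ww_pos hApos n).le
    have hn0 : (0:ℝ) ≤ (n:ℝ) := Nat.cast_nonneg n
    calc |uu ta tb tc n| ≤ ww A n := uu_abs_le htc hta htb n
    _ ≤ 1 * (ww A n * ((n:ℝ)+2)^2) := by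
        have hq : (1:ℝ) ≤ ((n:ℝ)+2)^2 := by nlinarith
        nlinarith [mul_le_mul_of_nonneg_left hq hw]
  · intro n
    have hw := (ww_pos hApos n).le
    have hs1 := ww_succ_le hA n
    have hn0 : (0:ℝ) ≤ (n:ℝ) := Nat.cast_nonneg n
    have h1 := uu_abs_le htc hta htb (n+1)
    have habs : |vv ta tb tc n| = |uu ta tb tc (n+1)| * ((n:ℝ)+1) := by
      rw [vv, abs_mul, abs_of_pos (by positivity : (0:ℝ) < (n:ℝ)+1)]
    rw [habs]
    calc |uu ta tb tc (n+1)| * ((n:ℝ)+1) ≤ ww A (n+1) * ((n:ℝ)+1) :=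
          mul_le_mul_of_nonneg_right h1 (by positivity)
    _ ≤ (A^2 * ww A n) * ((n:ℝ)+1) := mul_le_mul_of_nonneg_right hs1 (by positivity)
    _ ≤ A^2 * (ww A n * ((n:ℝ)+2)^2) := by
        have hq : ((n:ℝ)+1) ≤ ((n:ℝ)+2)^2 := by nlinarith
        nlinarith [mul_le_mul_of_nonneg_left hq (mul_nonneg (sq_nonneg A) hw)]
  · intro n
    have hw := (ww_pos hApos n).le
    have hw1 := (ww_pos hApos (n+1)).le
    have hs1 := ww_succ_le hA n
    have hs2 := ww_succ_le hA (n+1)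
    have hn0 : (0:ℝ) ≤ (n:ℝ) := Nat.cast_nonneg n
    have h1 := uu_abs_le htc hta htb (n+2)
    have habs : |vv2 ta tb tc n| = |uu ta tb tc (n+2)| * (((n:ℝ)+2)*((n:ℝ)+1)) := by
      rw [vv2, abs_mul, abs_of_pos (by positivity : (0:ℝ) < ((n:ℝ)+2)*((n:ℝ)+1))]
    rw [habs]
    have hchain : ww A (n+2) ≤ A^2 * (A^2 * ww A n) := by
      calc ww A (n+2) ≤ A^2 * ww A (n+1) := hs2
      _ ≤ A^2 * (A^2 * ww A n) := mul_le_mul_of_nonneg_left hs1 (by positivity)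
    calc |uu ta tb tc (n+2)| * (((n:ℝ)+2)*((n:ℝ)+1))
        ≤ ww A (n+2) * (((n:ℝ)+2)*((n:ℝ)+1)) := mul_le_mul_of_nonneg_right h1 (by positivity)
    _ ≤ (A^2 * (A^2 * ww A n)) * (((n:ℝ)+2)*((n:ℝ)+1)) :=
        mul_le_mul_of_nonneg_right hchain (by positivity)
    _ ≤ (A^2*A^2) * (ww A n * ((n:ℝ)+2)^2) := by
        have hq : ((n:ℝ)+2)*((n:ℝ)+1) ≤ ((n:ℝ)+2)^2 := by nlinarith
        nlinarith [mul_le_mul_of_nonneg_left hq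
          (mul_nonneg (sq_nonneg A) (mul_nonneg (sq_nonneg A) hw))]

variable (htc : 1 ≤ tc) {x : ℝ} (hx : |x| < 1)
include htc hx

lemma summable_u : Summable (fun n => uu ta tb tc n * x^n) := by
  obtain ⟨A, hA, hu, hv, hv2⟩ := exists_bounds (ta := ta) (tb := tb) htc
  exact summable_e hA one_pos.le hu hx

lemma summable_v : Summable (fun n => vv ta tb tc n * x^n) := by
  obtain ⟨A, hA, hu, hv, hv2⟩ := exists_bounds (ta := ta) (tb := tb) htc
  exact summable_e hA (by positivity) hv hx

lemma summable_v2 : Summable (fun n => vv2 ta tb tc n * x^n) := by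
  obtain ⟨A, hA, hu, hv, hv2⟩ := exists_bounds (ta := ta) (tb := tb) htc
  exact summable_e hA (by positivity) hv2 hx

lemma hasDerivAt_F0 : HasDerivAt (F0 ta tb tc) (FF1 ta tb tc x) x := by
  obtain ⟨A, hA, hu, hv, hv2⟩ := exists_bounds (ta := ta) (tb := tb) htc
  have h := hasDerivAt_e hA one_pos.le hu hx
  have heq : (∑' n, uu ta tb tc (n+1) * ((n:ℝ)+1) * x^n) = FF1 ta tb tc x := by
    rw [FF1]
    exact tsum_congr fun n => by rw [vv]
  rw [heq] at h
  exact h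

lemma hasDerivAt_FF1 : HasDerivAt (FF1 ta tb tc) (FF2 ta tb tc x) x := by
  obtain ⟨A, hA, hu, hv, hv2⟩ := exists_bounds (ta := ta) (tb := tb) htc
  have h := hasDerivAt_e hA (by positivity) hv hx
  have heq : (∑' n, vv ta tb tc (n+1) * ((n:ℝ)+1) * x^n) = FF2 ta tb tc x := by
    rw [FF2]
    apply tsum_congr fun n => ?_
    rw [vv, vv2]
    push_cast
    ring
  rw [heq] at h
  exact h

lemma hyp_ode :
    x*(1-x)*FF2 ta tb tc x + (tc - (ta+tb+1)*x)*FF1 ta tb tc x - ta*tb*F0 ta tb tc x = 0 := by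
  have htc0 : (0:ℝ) < tc := by linarith
  have h0 : HasSum (fun n => uu ta tb tc n * x^n) (F0 ta tb tc x) := (summable_u htc hx).hasSum
  have h1 : HasSum (fun n => vv ta tb tc n * x^n) (FF1 ta tb tc x) := (summable_v htc hx).hasSum
  have h2 : HasSum (fun n => vv2 ta tb tc n * x^n) (FF2 ta tb tc x) := (summable_v2 htc hx).hasSum
  -- shifted sums
  have hx1 : HasSum (fun n => uu ta tb tc n * (n:ℝ) * x^n) (x * FF1 ta tb tc x) := by
    have h := h1.mul_left x
    have he0 : (fun n : ℕ => uu ta tb tc (n+1) * ((n+1:ℕ):ℝ) * x^(n+1))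
        = fun n => x * (vv ta tb tc n * x^n) := by
      funext n; rw [vv]; push_cast; ring
    have := (hasSum_nat_add_iff (f := fun n => uu ta tb tc n * (n:ℝ) * x^n) 1).mp (by rw [← he0] at h; exact h)
    simpa using this
  have hx2 : HasSum (fun n => vv ta tb tc n * (n:ℝ) * x^n) (x * FF2 ta tb tc x) := by
    have h := h2.mul_left x
    have he0 : (fun n : ℕ => vv ta tb tc (n+1) * ((n+1:ℕ):ℝ) * x^(n+1))
        = fun n => x * (vv2 ta tb tc n * x^n) := by
      funext n; rw [vv, vv2]; push_cast; ring
    have := (hasSum_nat_add_iff (f := fun n => vv ta tb tc n * (n:ℝ) * x^n) 1).mp (by rw [← he0] at h; exact h)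
    simpa using this
  have hx3 : HasSum (fun n => uu ta tb tc n * (n:ℝ) * ((n:ℝ)-1) * x^n) (x^2 * FF2 ta tb tc x) := by
    have h := h2.mul_left (x^2)
    have he0 : (fun n : ℕ => uu ta tb tc (n+2) * ((n+2:ℕ):ℝ) * (((n+2:ℕ):ℝ)-1) * x^(n+2))
        = fun n => x^2 * (vv2 ta tb tc n * x^n) := by
      funext n; rw [vv2]; push_cast; ring
    have := (hasSum_nat_add_iff (f := fun n => uu ta tb tc n * (n:ℝ) * ((n:ℝ)-1) * x^n) 2).mp (by rw [← he0] at h; exact h)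
    have hsum0 : (∑ n ∈ Finset.range 2, uu ta tb tc n * (n:ℝ) * ((n:ℝ)-1) * x^n) = 0 := by
      rw [Finset.sum_range_succ, Finset.sum_range_one]
      norm_num
    rw [hsum0, add_zero] at this
    exact this
  -- combination
  have hcomb : HasSum (fun n : ℕ =>
      (tc * (vv ta tb tc n * x^n) + vv ta tb tc n * (n:ℝ) * x^n)
        - uu ta tb tc n * (n:ℝ) * ((n:ℝ)-1) * x^n
        - (ta+tb+1) * (uu ta tb tc n * (n:ℝ) * x^n)
        - (ta*tb) * (uu ta tb tc n * x^n))
      ((tc * FF1 ta tb tc x + x * FF2 ta tb tc x) - x^2 * FF2 ta tb tc x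
        - (ta+tb+1) * (x * FF1 ta tb tc x) - (ta*tb) * (F0 ta tb tc x)) :=
    ((((h1.mul_left tc).add hx2).sub hx3).sub (hx1.mul_left (ta+tb+1))).sub (h0.mul_left (ta*tb))
  have hzero : (fun n : ℕ =>
      (tc * (vv ta tb tc n * x^n) + vv ta tb tc n * (n:ℝ) * x^n)
        - uu ta tb tc n * (n:ℝ) * ((n:ℝ)-1) * x^n
        - (ta+tb+1) * (uu ta tb tc n * (n:ℝ) * x^n)
        - (ta*tb) * (uu ta tb tc n * x^n)) = fun _ => (0:ℝ) := by
    funext n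
    rw [vv]
    linear_combination x^n * uu_rec htc0 n
  rw [hzero] at hcomb
  have := hcomb.unique hasSum_zero
  linear_combination this

end inst

end Stmt9Aux

open Stmt9Aux

/-- The Region-1 solution `Φ(y) = y^σ (y²+α²)^{β/2} ₂F₁(ã, b̃; c̃; −y²/α²)` of the
separated radial equation of the 3-charge microstate geometries is twice
differentiable on `(0, α)` and satisfies
`y(y²+α²) d/dy[y(y²+α²) Φ′] − (a y⁴ − b y² + c) Φ = 0` there. -/
theorem stmt9 (α a b c : ℝ) (hα : 0 < α) (ha : 0 < 1 + a) (hc : 0 ≤ c)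
    (habc : 0 ≤ a + b / α ^ 2 + c / α ^ 4) :
    let ν := Real.sqrt (1 + a)
    let β := Real.sqrt (a + b / α ^ 2 + c / α ^ 4)
    let σ := Real.sqrt c / α ^ 2
    let ta := (1 - ν + β + σ) / 2
    let tb := (1 + ν + β + σ) / 2
    let tc := 1 + σ
    let Φ : ℝ → ℝ := fun y =>
      y ^ σ * (y ^ 2 + α ^ 2) ^ (β / 2) * hyp2F1 ta tb tc (-(y ^ 2 / α ^ 2))
    ∀ y ∈ Set.Ioo 0 α,
      DifferentiableAt ℝ Φ y ∧ DifferentiableAt ℝ (deriv Φ) y ∧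
      y * (y ^ 2 + α ^ 2) * deriv (fun z => z * (z ^ 2 + α ^ 2) * deriv Φ z) y
        - (a * y ^ 4 - b * y ^ 2 + c) * Φ y = 0 := by
  intro ν β σ ta tb tc Φ y hy
  obtain ⟨hy0, hyα⟩ := hy
  -- basic facts
  have hσ0 : 0 ≤ σ := by
    have := Real.sqrt_nonneg c
    have h2 : (0:ℝ) < α^2 := by positivity
    exact div_nonneg (Real.sqrt_nonneg c) h2.le
  have hβ0 : 0 ≤ β := Real.sqrt_nonneg _
  have hta' : ta = (1-ν+β+σ)/2 := rfl
  have htb' : tb = (1+ν+β+σ)/2 := rfl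
  have htc' : tc = 1+σ := rfl
  have hΦdef : Φ = fun w : ℝ => w ^ σ * (w^2+α^2)^(β/2) * F0 ta tb tc (-(w^2/α^2)) := rfl
  have htc : (1:ℝ) ≤ tc := by rw [htc']; linarith
  have hν2 : ν^2 = 1 + a := Real.sq_sqrt ha.le
  have hβ2 : β^2 = a + b/α^2 + c/α^4 := Real.sq_sqrt habc
  have hσ2' : σ^2 * α^4 = c := by
    show (Real.sqrt c / α^2)^2 * α^4 = c
    rw [div_pow, Real.sq_sqrt hc, show (α:ℝ)^4 = (α^2)^2 from by ring]
    field_simp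
  clear_value ν β σ ta tb tc Φ
  have hS2 : (0:ℝ) < y^2 + α^2 := by positivity
  -- the hypergeometric argument
  set X : ℝ := -(y^2/α^2) with hXdef
  have hX : |X| < 1 := by
    rw [hXdef, abs_neg, abs_of_nonneg (by positivity)]
    rw [div_lt_one (by positivity)]
    nlinarith
  -- prefactor and bracket functions
  set Pf : ℝ → ℝ := fun z => z ^ σ * (z^2+α^2) ^ (β/2) with hPf
  set Bf : ℝ → ℝ := fun z => (σ * z⁻¹ + β*z*(z^2+α^2)⁻¹) * F0 ta tb tc (-(z^2/α^2))
      + (-(2*z/α^2)) * FF1 ta tb tc (-(z^2/α^2)) with hBf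
  have hΦeq : ∀ z : ℝ, Φ z = Pf z * F0 ta tb tc (-(z^2/α^2)) := by
    intro z
    rw [hΦdef, hPf]
  -- derivative of Φ on Ioo
  have claimA : ∀ z ∈ Set.Ioo (0:ℝ) α, HasDerivAt Φ (Pf z * Bf z) z := by
    rintro z ⟨hz0, hzα⟩
    have hzS2 : (0:ℝ) < z^2 + α^2 := by positivity
    have hXz : |(-(z^2/α^2))| < 1 := by
      rw [abs_neg, abs_of_nonneg (by positivity), div_lt_one (by positivity)]
      nlinarith
    have hrp1 : HasDerivAt (fun w : ℝ => w ^ σ) (σ * z^(σ-1)) z :=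
      Real.hasDerivAt_rpow_const (Or.inl hz0.ne')
    have hsq : HasDerivAt (fun w : ℝ => w^2 + α^2) (2*z) z := by
      have := (hasDerivAt_pow 2 z).add_const (α^2)
      norm_num at this
      exact this.add_const (α^2)
    have hrp2 : HasDerivAt (fun w : ℝ => (w^2+α^2) ^ (β/2))
        ((2*z) * (β/2) * (z^2+α^2)^(β/2-1)) z := hsq.rpow_const (Or.inl hzS2.ne')
    have hxin : HasDerivAt (fun w : ℝ => -(w^2/α^2)) (-(2*z/α^2)) z := by
      have h := ((hasDerivAt_pow 2 z).div_const (α^2)).neg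
      norm_num at h
      exact h
    have hF0c : HasDerivAt (fun w : ℝ => F0 ta tb tc (-(w^2/α^2)))
        (FF1 ta tb tc (-(z^2/α^2)) * (-(2*z/α^2))) z :=
      by exact (hasDerivAt_F0 (ta := ta) (tb := tb) htc hXz).comp z hxin
    have hraw := (hrp1.mul hrp2).mul hF0c
    have hval : (σ * z^(σ-1) * (z^2+α^2)^(β/2) + z^σ * ((2*z) * (β/2) * (z^2+α^2)^(β/2-1)))
          * F0 ta tb tc (-(z^2/α^2))
        + z ^ σ * (z^2+α^2)^(β/2) * (FF1 ta tb tc (-(z^2/α^2)) * (-(2*z/α^2)))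
        = Pf z * Bf z := by
      rw [hPf, hBf]
      rw [Real.rpow_sub_one hz0.ne', Real.rpow_sub_one hzS2.ne']
      field_simp
    rw [hΦdef, ← hval]
    exact hraw
  -- derivative pieces at y
  have hXy : |(-(y^2/α^2))| < 1 := by rw [← hXdef]; exact hX
  have hrp1 : HasDerivAt (fun w : ℝ => w ^ σ) (σ * y^(σ-1)) y :=
    Real.hasDerivAt_rpow_const (Or.inl hy0.ne')
  have hsq : HasDerivAt (fun w : ℝ => w^2 + α^2) (2*y) y := by
    have := (hasDerivAt_pow 2 y).add_const (α^2)
    norm_num at this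
    exact this.add_const (α^2)
  have hrp2 : HasDerivAt (fun w : ℝ => (w^2+α^2) ^ (β/2))
      ((2*y) * (β/2) * (y^2+α^2)^(β/2-1)) y := hsq.rpow_const (Or.inl hS2.ne')
  have hP : HasDerivAt Pf
      (σ * y^(σ-1) * (y^2+α^2)^(β/2) + y^σ * ((2*y) * (β/2) * (y^2+α^2)^(β/2-1))) y :=
    hrp1.mul hrp2
  have hxin : HasDerivAt (fun w : ℝ => -(w^2/α^2)) (-(2*y/α^2)) y := by
    have h := ((hasDerivAt_pow 2 y).div_const (α^2)).neg
    norm_num at h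
    exact h
  have hF0c : HasDerivAt (fun w : ℝ => F0 ta tb tc (-(w^2/α^2)))
      (FF1 ta tb tc X * (-(2*y/α^2))) y := by
    rw [hXdef]; exact (hasDerivAt_F0 htc hXy).comp y hxin
  have hFF1c : HasDerivAt (fun w : ℝ => FF1 ta tb tc (-(w^2/α^2)))
      (FF2 ta tb tc X * (-(2*y/α^2))) y := by
    rw [hXdef]; exact (hasDerivAt_FF1 htc hXy).comp y hxin
  have b1 : HasDerivAt (fun z : ℝ => σ * z⁻¹) (σ * (-(y^2)⁻¹)) y :=
    (hasDerivAt_inv hy0.ne').const_mul σ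
  have binv2 : HasDerivAt (fun z : ℝ => (z^2+α^2)⁻¹) (-(2*y) / (y^2+α^2)^2) y :=
    hsq.inv hS2.ne'
  have b2a : HasDerivAt (fun z : ℝ => β*z) (β*1) y := (hasDerivAt_id y).const_mul β
  have b2 : HasDerivAt (fun z : ℝ => β*z*(z^2+α^2)⁻¹)
      (β*1*(y^2+α^2)⁻¹ + β*y*(-(2*y)/(y^2+α^2)^2)) y := b2a.mul binv2
  have b3 : HasDerivAt (fun z : ℝ => -(2*z/α^2)) (-(2*1/α^2)) y :=
    (((hasDerivAt_id y).const_mul 2).div_const (α^2)).neg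
  have hB : HasDerivAt Bf
      ((σ * (-(y^2)⁻¹) + (β*1*(y^2+α^2)⁻¹ + β*y*(-(2*y)/(y^2+α^2)^2))) * F0 ta tb tc X
        + (σ * y⁻¹ + β*y*(y^2+α^2)⁻¹) * (FF1 ta tb tc X * (-(2*y/α^2)))
        + ((-(2*1/α^2)) * FF1 ta tb tc X + (-(2*y/α^2)) * (FF2 ta tb tc X * (-(2*y/α^2))))) y := by
    exact ((b1.add b2).mul hF0c).add (b3.mul hFF1c)
  have hq : HasDerivAt (fun z : ℝ => z*(z^2+α^2)) (1*(y^2+α^2) + y*(2*y)) y :=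
    (hasDerivAt_id y).mul hsq
  have hG := hq.mul (hP.mul hB)
  -- differentiability conclusions
  have hdΦ : DifferentiableAt ℝ Φ y := (claimA y ⟨hy0, hyα⟩).differentiableAt
  have hmem : Set.Ioo (0:ℝ) α ∈ nhds y := Ioo_mem_nhds hy0 hyα
  have hdeq : deriv Φ =ᶠ[nhds y] (fun z => Pf z * Bf z) := by
    filter_upwards [hmem] with z hz
    exact (claimA z hz).deriv
  have hdΦ1 : DifferentiableAt ℝ (deriv Φ) y := by
    rw [hdeq.differentiableAt_iff]
    exact (hP.mul hB).differentiableAt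
  refine ⟨hdΦ, hdΦ1, ?_⟩
  -- rewrite the second derivative
  have hEq2 : (fun z => z * (z^2+α^2) * deriv Φ z) =ᶠ[nhds y]
      (fun z => z*(z^2+α^2) * (Pf z * Bf z)) := by
    filter_upwards [hmem] with z hz
    rw [(claimA z hz).deriv]
  rw [hEq2.deriv_eq, HasDerivAt.deriv (f := fun z => z*(z^2+α^2) * (Pf z * Bf z)) hG, Pi.mul_apply, hΦeq y]
  -- algebra
  have hode := hyp_ode (ta := ta) (tb := tb) htc hX
  have hX0 : X < 0 := by
    rw [hXdef]
    have h : (0:ℝ) < y^2/α^2 := by positivity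
    linarith
  have hXne : X * (1 - X) ≠ 0 := by
    have h1 : X ≠ 0 := ne_of_lt hX0
    have h2 : (0:ℝ) < 1 - X := by linarith
    exact mul_ne_zero h1 (ne_of_gt h2)
  have hA2 : FF2 ta tb tc X =
      (ta*tb*F0 ta tb tc X - (tc - (ta+tb+1)*X)*FF1 ta tb tc X) / (X*(1-X)) := by
    rw [eq_div_iff hXne]
    linear_combination hode
  have hXprod : X*(1-X) = -(y^2*(y^2+α^2))/α^4 := by
    rw [hXdef]
    field_simp
    ring
  rw [hA2, hXprod]
  -- replace parameters
  have ha' : a = ν^2 - 1 := by linarith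
  have hb2' : β^2*α^4 = a*α^4 + b*α^2 + c := by
    rw [hβ2]; field_simp
  have hc' : c = σ^2*α^4 := hσ2'.symm
  have hb' : b = (β^2 - σ^2 - ν^2 + 1)*α^2 := by
    have hα2 : (α:ℝ)^2 ≠ 0 := by positivity
    have h2 : b * α^2 = ((β^2 - σ^2 - ν^2 + 1)*α^2) * α^2 := by
      linear_combination -hb2' + hσ2' - α^4 * ha'
    exact mul_right_cancel₀ hα2 h2
  simp only [hPf, hBf]
  rw [Real.rpow_sub_one hy0.ne', Real.rpow_sub_one hS2.ne', hta', htb', htc', ha', hb', hc',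
    hXdef]
  have hyne : y ≠ 0 := hy0.ne'
  have hS2ne : (y^2+α^2) ≠ 0 := hS2.ne'
  have hαne : (α:ℝ) ≠ 0 := hα.ne'
  field_simp
  ring
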